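/- Let d ≥ 1 and let ρ satisfy conditions (I) and (II). For ε ∈ ℂ with ε^d = −1 define the pairing ⟨f,g⟩_ε = ∫_ℂ f(z)·conj(σ_ε g(z))·ρ(z) dx dy, where σ_ε g(z) = Σ_{ℓ=0}^{d−1} (−ε)^{−ℓ}·g_ℓ(ε·z). Then the pairing is independent of the choice of ε: if ε₁^d = −1 and ε₂^d = −1, then ⟨f,g⟩_{ε₁} = ⟨f,g⟩_{ε₂} for all complex polynomials f, g. -/

import Mathlib

open MeasureTheory Polynomial Complex

/-- The weight-`ℓ` component (mod `d`) of a polynomial: the sum of its monomials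
whose degree is congruent to `ℓ` mod `d`. -/
noncomputable def weightComp (d ℓ : ℕ) (f : Polynomial ℂ) : Polynomial ℂ :=
  ∑ k ∈ f.support.filter (fun k => k % d = ℓ), Polynomial.monomial k (f.coeff k)

/-- A polynomial has weight `ℓ` (mod `d`) if all its monomials have degree `≡ ℓ [MOD d]`. -/
def HasWeight (d ℓ : ℕ) (f : Polynomial ℂ) : Prop :=
  ∀ k ∈ f.support, k % d = ℓ

/-- `σg(z) = Σ_{ℓ=0}^{d-1} (-ε)^{-ℓ} g_ℓ(ε z)`. -/
noncomputable def sigmaMap (d : ℕ) (ε : ℂ) (g : Polynomial ℂ) (z : ℂ) : ℂ :=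
  ∑ ℓ ∈ Finset.range d, (-ε) ^ (-(ℓ : ℤ)) * (weightComp d ℓ g).eval (ε * z)

/-- The pairing `⟨f,g⟩ = ∫_ℂ f(z) conj(σg(z)) ρ(z) dx dy`. -/
noncomputable def genPairing (d : ℕ) (ε : ℂ) (ρ : ℂ → ℂ) (f g : Polynomial ℂ) : ℂ :=
  ∫ z : ℂ, f.eval z * (starRingEnd ℂ) (sigmaMap d ε g z) * ρ z

/-- Condition (I): `ρ` is measurable and `∫_ℂ |z|^n |ρ(z)| dx dy < ∞` for all `n`. -/
def CondI (ρ : ℂ → ℂ) : Prop :=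
  Measurable ρ ∧
  ∀ n : ℕ, MeasureTheory.Integrable (fun z : ℂ => ‖z‖ ^ n * ‖ρ z‖)

/-- Condition (II): `ρ(ε z) = conj(ρ(z))` for every `ε` with `ε^d = -1`. -/
def CondII (d : ℕ) (ρ : ℂ → ℂ) : Prop :=
  ∀ ε : ℂ, ε ^ d = -1 → ∀ z : ℂ, ρ (ε * z) = (starRingEnd ℂ) (ρ z)


lemma key_scalar (d : ℕ) (ε : ℂ) (hε : ε ^ d = -1) (hd : 1 ≤ d) (k : ℕ) :
    (-ε) ^ (-((k % d : ℕ) : ℤ)) * ε ^ k = (-1 : ℂ) ^ (k % d + k / d) := by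
  have hε0 : ε ≠ 0 := by
    intro h; rw [h, zero_pow (by omega)] at hε
    exact absurd hε (by norm_num)
  have hεk : ε ^ k = (-1 : ℂ) ^ (k / d) * ε ^ (k % d) := by
    conv_lhs => rw [← Nat.div_add_mod k d]
    rw [pow_add, pow_mul, hε]
  rw [zpow_neg, zpow_natCast, hεk, neg_pow]
  have h1 : ((-1 : ℂ) ^ (k % d)) ≠ 0 := pow_ne_zero _ (by norm_num)
  have h2 : (ε : ℂ) ^ (k % d) ≠ 0 := pow_ne_zero _ hε0
  field_simp
  ring_nf
  first
  | (rw [mul_comm (k % d) 2, pow_mul]; norm_num)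
  | (rw [← pow_mul, mul_comm (k % d) 2, pow_mul]; norm_num)

lemma sigma_indep (d : ℕ) (hd : 1 ≤ d) (ε : ℂ) (hε : ε ^ d = -1) (g : Polynomial ℂ) (z : ℂ) :
    sigmaMap d ε g z = ∑ k ∈ g.support, (-1 : ℂ) ^ (k % d + k / d) * (g.coeff k * z ^ k) := by
  unfold sigmaMap weightComp
  simp only [Polynomial.eval_finset_sum, Polynomial.eval_monomial, Finset.mul_sum]
  rw [← Finset.sum_fiberwise_of_maps_to (g := fun k => k % d) (t := Finset.range d)
      (fun k _ => Finset.mem_range.mpr (Nat.mod_lt _ (by omega)))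
      (fun k => (-1 : ℂ) ^ (k % d + k / d) * (g.coeff k * z ^ k))]
  refine Finset.sum_congr rfl fun ℓ _ => Finset.sum_congr rfl fun k hk => ?_
  have hkℓ : k % d = ℓ := (Finset.mem_filter.mp hk).2
  rw [← hkℓ, mul_pow]
  linear_combination (g.coeff k * z ^ k) * key_scalar d ε hε hd k

theorem stmt_9 (d : ℕ) (hd : 1 ≤ d) (ρ : ℂ → ℂ) (hI : CondI ρ) (hII : CondII d ρ)
    (ε₁ ε₂ : ℂ) (hε₁ : ε₁ ^ d = -1) (hε₂ : ε₂ ^ d = -1) :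
    ∀ f g : Polynomial ℂ, genPairing d ε₁ ρ f g = genPairing d ε₂ ρ f g := by
  intro f g
  unfold genPairing
  have h : ∀ z, sigmaMap d ε₁ g z = sigmaMap d ε₂ g z := fun z => by
    rw [sigma_indep d hd ε₁ hε₁ g z, sigma_indep d hd ε₂ hε₂ g z]
  simp only [h]
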